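/- Axiom (5) is valid in 𝓜(S5m): for all a ∈ V, x ∈ □̃₃ a, y ∈ □̃₃ x, and w ∈ x →̃ y, we have w ∈ D = {T, t}. (This encodes validity of □φ → □□φ.) -/
import Mathlib


inductive MV | T | t | f | F
deriving DecidableEq

open MV

def D : Set MV := {T, t}

def mneg : MV → MV
  | T => F | t => f | f => t | F => T

def mimp : MV → MV → Set MV
  | T, b => {b}
  | t, T => {T} | t, t => {T, t} | t, f => {f} | t, F => {f}
  | f, T => {T} | f, t => {T, t} | f, f => {T, t} | f, F => {t}
  | F, _ => {T}

def box1 : MV → Set MV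
  | T => {T, t} | _ => {f, F}

def box2 : MV → Set MV
  | T => {T} | _ => {f, F}

def box3 : MV → Set MV
  | T => {T} | _ => {F}

theorem ax5_valid :
    ∀ a x y w : MV, x ∈ box3 a → y ∈ box3 x → w ∈ mimp x y → w ∈ D := by
  intro a x y w hx hy hw
  cases a <;> cases x <;> cases y <;> cases w <;> simp_all [box3, mimp, D]
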